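/- arXiv:2403.05120 — 4 statements merged into one kernel-verified Lean document; each statement's English description precedes it below -/
import Mathlib

section
/- If G is a connected graph that is not complete, then μ(D(G)) ≥ n(G) + μ_t(G). -/
open SimpleGraph

variable {V : Type*}

/-- A walk is a shortest path if it is a path and its length equals the distance
between its endpoints. -/
def SimpleGraph.IsShortestPath (G : SimpleGraph V) {u v : V} (p : G.Walk u v) : Prop :=
  p.IsPath ∧ p.length = G.dist u v

/-- `S` is a general position set: no three vertices of `S` lie on a common shortest path. -/
def SimpleGraph.IsGPSet (G : SimpleGraph V) (S : Set V) : Prop :=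
  ∀ ⦃u v : V⦄ (p : G.Walk u v), G.IsShortestPath p →
    ∀ x ∈ S, ∀ y ∈ S, ∀ z ∈ S, x ≠ y → x ≠ z → y ≠ z →
      ¬ (x ∈ p.support ∧ y ∈ p.support ∧ z ∈ p.support)

/-- `u` and `v` are `S`-visible: some shortest `u,v`-path has no internal vertex in `S`. -/
def SimpleGraph.SVisible (G : SimpleGraph V) (S : Set V) (u v : V) : Prop :=
  ∃ p : G.Walk u v, G.IsShortestPath p ∧ ∀ w ∈ p.support, w ≠ u → w ≠ v → w ∉ S

/-- `S` is a mutual-visibility set. -/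
def SimpleGraph.IsMVSet (G : SimpleGraph V) (S : Set V) : Prop :=
  ∀ u ∈ S, ∀ v ∈ S, u ≠ v → G.SVisible S u v

/-- `S` is a total mutual-visibility set. -/
def SimpleGraph.IsTotalMVSet (G : SimpleGraph V) (S : Set V) : Prop :=
  ∀ u v : V, u ≠ v → G.SVisible S u v

/-- `S` is an outer mutual-visibility set. -/
def SimpleGraph.IsOuterMVSet (G : SimpleGraph V) (S : Set V) : Prop :=
  G.IsMVSet S ∧ ∀ u ∈ S, ∀ v ∉ S, u ≠ v → G.SVisible S u v

/-- The mutual-visibility number `μ(G)`. -/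
noncomputable def SimpleGraph.mutualVisibilityNumber (G : SimpleGraph V) [Fintype V] : ℕ :=
  sSup {k | ∃ S : Finset V, G.IsMVSet ↑S ∧ S.card = k}

/-- The total mutual-visibility number `μ_t(G)`. -/
noncomputable def SimpleGraph.totalMutualVisibilityNumber (G : SimpleGraph V) [Fintype V] : ℕ :=
  sSup {k | ∃ S : Finset V, G.IsTotalMVSet ↑S ∧ S.card = k}

/-- The outer mutual-visibility number `μ_o(G)`. -/
noncomputable def SimpleGraph.outerMutualVisibilityNumber (G : SimpleGraph V) [Fintype V] : ℕ :=
  sSup {k | ∃ S : Finset V, G.IsOuterMVSet ↑S ∧ S.card = k}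

/-- The general position number `gp(G)`. -/
noncomputable def SimpleGraph.gpNumber (G : SimpleGraph V) [Fintype V] : ℕ :=
  sSup {k | ∃ S : Finset V, G.IsGPSet ↑S ∧ S.card = k}

/-- The double graph `D(G)`: two copies of each vertex, `(u, b)` adjacent to `(v, c)`
iff `u` adjacent to `v` in `G`. -/
def SimpleGraph.doubleGraph (G : SimpleGraph V) : SimpleGraph (V × Bool) where
  Adj x y := G.Adj x.1 y.1
  symm := ⟨fun _ _ h => G.adj_symm h⟩
  loopless := ⟨fun x h => G.irrefl h⟩

/-- The Mycielskian `M(G)`: `some (u, false)` are the original vertices, `some (u, true)`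
their copies, and `none` is the apex vertex `v*`. -/
def SimpleGraph.mycielskian (G : SimpleGraph V) : SimpleGraph (Option (V × Bool)) where
  Adj x y := match x, y with
    | some (u, false), some (v, false) => G.Adj u v
    | some (u, false), some (v, true) => G.Adj u v
    | some (u, true), some (v, false) => G.Adj u v
    | some (_, true), none => True
    | none, some (_, true) => True
    | _, _ => False
  symm := by
    constructor
    rintro (_ | ⟨u, (_|_)⟩) (_ | ⟨v, (_|_)⟩) h <;>
      first
        | exact h
        | exact G.adj_symm h
  loopless := by
    constructor
    rintro (_ | ⟨u, (_|_)⟩) h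
    · exact h
    · exact G.irrefl h
    · exact h



namespace DoubleAux

open SimpleGraph Walk

variable {V : Type*} {G : SimpleGraph V}

/-- Projection homomorphism from the double graph to the base graph. -/
def fstHom (G : SimpleGraph V) : G.doubleGraph →g G := ⟨Prod.fst, fun h => h⟩

/-- Lift of a nonempty walk to the double graph, interior vertices getting bool `true`. -/
def liftCons (G : SimpleGraph V) : ∀ {u w v : V} (b c : Bool), G.Adj u w → G.Walk w v →
    G.doubleGraph.Walk (u, b) (v, c)
  | _, _, _, b, c, h, Walk.nil => Walk.cons (show G.doubleGraph.Adj (_, b) (_, c) from h) Walk.nil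
  | _, _, _, b, c, h, Walk.cons h' q =>
      Walk.cons (show G.doubleGraph.Adj (_, b) (_, true) from h) (liftCons G true c h' q)

lemma liftCons_length : ∀ {u w v : V} (b c : Bool) (h : G.Adj u w) (q : G.Walk w v),
    (liftCons G b c h q).length = q.length + 1
  | _, _, _, b, c, h, Walk.nil => rfl
  | _, _, _, b, c, h, Walk.cons h' q => by
      simp [liftCons, liftCons_length true c h' q]

lemma liftCons_support_map : ∀ {u w v : V} (b c : Bool) (h : G.Adj u w) (q : G.Walk w v),
    (liftCons G b c h q).support.map Prod.fst = (Walk.cons h q).support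
  | _, _, _, b, c, h, Walk.nil => rfl
  | _, _, _, b, c, h, Walk.cons h' q => by
      simp [liftCons, liftCons_support_map true c h' q]

lemma liftCons_snd : ∀ {u w v : V} (b c : Bool) (h : G.Adj u w) (q : G.Walk w v),
    ∀ x ∈ (liftCons G b c h q).support, x.2 = true ∨ x = (u, b) ∨ x = (v, c)
  | _, _, _, b, c, h, Walk.nil => by
      intro x hx
      simp only [liftCons, support_cons, support_nil, List.mem_cons, List.mem_singleton] at hx
      rcases hx with h1 | h1 | h1
      · simp [h1]
      · simp [h1]
      · exact absurd h1 List.not_mem_nil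
  | _, _, _, b, c, h, Walk.cons h' q => by
      intro x hx
      simp only [liftCons, support_cons, List.mem_cons] at hx
      rcases hx with h1 | h1
      · exact Or.inr (Or.inl h1)
      · rcases liftCons_snd true c h' q x h1 with h2 | h2 | h2
        · exact Or.inl h2
        · exact Or.inl (by simp [h2])
        · exact Or.inr (Or.inr h2)

lemma dist_le_double_dist {x y : V × Bool} (hr : G.doubleGraph.Reachable x y) :
    G.dist x.1 y.1 ≤ G.doubleGraph.dist x y := by
  obtain ⟨p, hp⟩ := hr.exists_walk_length_eq_dist
  calc G.dist x.1 y.1 ≤ (p.map (fstHom G)).length := SimpleGraph.dist_le _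
    _ = G.doubleGraph.dist x y := by rw [Walk.length_map]; exact hp

/-- The key lifting lemma: a shortest path avoiding T internally lifts to a shortest
path in the double graph whose interior vertices all have bool `true` and first
coordinate outside `T`. -/
lemma exists_lift {T : Set V} {u v : V} (huv : u ≠ v) (p : G.Walk u v)
    (hp : G.IsShortestPath p) (hpT : ∀ w ∈ p.support, w ≠ u → w ≠ v → w ∉ T) (b c : Bool) :
    ∃ W : G.doubleGraph.Walk (u, b) (v, c), G.doubleGraph.IsShortestPath W ∧
      ∀ x ∈ W.support, x ≠ (u, b) → x ≠ (v, c) → x.2 = true ∧ x.1 ∉ T := by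
  obtain ⟨hpath, hlen⟩ := hp
  cases p with
  | nil => exact absurd rfl huv
  | cons h q =>
    refine ⟨liftCons G b c h q, ⟨?_, ?_⟩, ?_⟩
    · -- IsPath
      rw [Walk.isPath_def]
      have := hpath.support_nodup
      rw [← liftCons_support_map b c h q] at this
      exact this.of_map _
    · -- length = dist
      have hmap := liftCons_support_map (G := G) b c h q
      have hlen' : (liftCons G b c h q).length = G.dist u v := by
        rw [liftCons_length, ← hlen]; rfl
      have h1 : G.doubleGraph.dist (u, b) (v, c) ≤ (liftCons G b c h q).length :=
        SimpleGraph.dist_le _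
      have h2 : G.dist u v ≤ G.doubleGraph.dist (u, b) (v, c) :=
        dist_le_double_dist ⟨liftCons G b c h q⟩
      omega
    · -- interior condition
      intro x hx hxu hxv
      have hsnd := liftCons_snd b c h q x hx
      have hfst : x.1 ∈ (Walk.cons h q).support := by
        rw [← liftCons_support_map b c h q]
        exact List.mem_map_of_mem (f := Prod.fst) hx
      have hnodup : ((liftCons G b c h q).support.map Prod.fst).Nodup := by
        rw [liftCons_support_map b c h q]; exact hpath.support_nodup
      have hinj := List.inj_on_of_nodup_map hnodup
      have hx1u : x.1 ≠ u := by
        intro hh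
        exact hxu (hinj hx ((liftCons G b c h q).start_mem_support) hh)
      have hx1v : x.1 ≠ v := by
        intro hh
        exact hxv (hinj hx ((liftCons G b c h q).end_mem_support) hh)
      have hxt : x.2 = true := by
        rcases hsnd with h1 | h1 | h1
        · exact h1
        · exact absurd h1 hxu
        · exact absurd h1 hxv
      exact ⟨hxt, hpT x.1 hfst hx1u hx1v⟩

/-- Every vertex of a total mutual-visibility set has a neighbor outside it,
provided the graph is connected and not complete. -/
lemma exists_nbr_not_mem {T : Set V} (hconn : G.Connected) (hnc : G ≠ ⊤)
    (hT : G.IsTotalMVSet T) {t : V} (ht : t ∈ T) : ∃ w, G.Adj t w ∧ w ∉ T := by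
  by_cases hball : ∀ x, x ≠ t → G.Adj t x
  · -- t is adjacent to everything; use a non-adjacent pair elsewhere
    have : ∃ a b_, a ≠ b_ ∧ ¬ G.Adj a b_ := by
      by_contra hcon
      push_neg at hcon
      apply hnc
      ext a b_
      simp only [top_adj]
      exact ⟨fun h => h.ne, fun h => hcon a b_ h⟩
    obtain ⟨a, b2, hab, hnadj⟩ := this
    have hat : a ≠ t := by rintro rfl; exact hnadj ((hball b2 (Ne.symm hab)).symm.symm)
    have hbt : b2 ≠ t := by rintro rfl; exact hnadj ((hball a hat).symm)
    obtain ⟨p, ⟨hpath, hlen⟩, hint⟩ := hT a b2 hab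
    have hdle : G.dist a b2 ≤ 2 := by
      calc G.dist a b2
          ≤ (Walk.cons ((hball a hat).symm) (Walk.cons (hball b2 hbt) Walk.nil)).length :=
            SimpleGraph.dist_le _
        _ = 2 := rfl
    have hdge : 2 ≤ G.dist a b2 := by
      have h0 : G.dist a b2 ≠ 0 := fun hh => hab (hconn.dist_eq_zero_iff.mp hh)
      have h1 : G.dist a b2 ≠ 1 := fun hh => hnadj (SimpleGraph.dist_eq_one_iff_adj.mp hh)
      omega
    have hd2 : G.dist a b2 = 2 := le_antisymm hdle hdge
    -- p has length 2; its middle vertex works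
    cases p with
    | nil => exact absurd rfl hab
    | cons h q =>
      cases q with
      | nil => simp [hd2] at hlen
      | cons h' q' =>
        cases q' with
        | nil =>
          rename_i m
          have hma : m ≠ a := h.ne'
          have hmb : m ≠ b2 := h'.ne
          have hmT : m ∉ T := by
            apply hint m _ hma hmb
            simp
          have hmt : m ≠ t := fun hh => hmT (hh ▸ ht)
          exact ⟨m, hball m hmt, hmT⟩
        | cons h'' q'' => simp [hd2, Walk.length_cons] at hlen
  · push_neg at hball
    obtain ⟨x, hxt, hnadj⟩ := hball
    obtain ⟨p, ⟨hpath, hlen⟩, hint⟩ := hT t x (Ne.symm hxt)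
    cases p with
    | nil => exact absurd rfl (Ne.symm hxt)
    | cons h q =>
      rename_i m
      have hmt : m ≠ t := h.ne'
      have hmx : m ≠ x := by
        rintro rfl
        have : q = Walk.nil := Walk.isPath_iff_eq_nil.mp hpath.of_cons
        subst this
        exact hnadj h
      refine ⟨m, h, hint m ?_ hmt hmx⟩
      simp
end DoubleAux

theorem mu_double_ge [Fintype V] (G : SimpleGraph V) (hconn : G.Connected)
    (hnc : G ≠ ⊤) :
    Fintype.card V + G.totalMutualVisibilityNumber ≤ G.doubleGraph.mutualVisibilityNumber := by
  classical
  -- the set of cardinalities of total MV sets is nonempty and bounded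
  have hempty : G.IsTotalMVSet (↑(∅ : Finset V)) := by
    intro u v huv
    obtain ⟨p, hpath, hlen⟩ := hconn.exists_path_of_dist u v
    exact ⟨p, ⟨hpath, hlen⟩, fun w _ _ _ => by simp⟩
  have hne : {k | ∃ S : Finset V, G.IsTotalMVSet ↑S ∧ S.card = k}.Nonempty :=
    ⟨0, ∅, hempty, Finset.card_empty⟩
  have hbdd : BddAbove {k | ∃ S : Finset V, G.IsTotalMVSet ↑S ∧ S.card = k} :=
    ⟨Fintype.card V, fun k ⟨S, _, hc⟩ => hc ▸ S.card_le_univ⟩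
  obtain ⟨T, hT, hTcard⟩ : ∃ S : Finset V, G.IsTotalMVSet ↑S ∧
      S.card = G.totalMutualVisibilityNumber := Nat.sSup_mem hne hbdd
  -- the mutual-visibility set in the double graph
  set S2 : Finset (V × Bool) :=
    Finset.univ.image (fun v => (v, false)) ∪ T.image (fun t => (t, true)) with hS2
  have hmemf : ∀ a : V, (a, false) ∈ S2 := by
    intro a
    simp [hS2]
  have hmemt : ∀ a : V, ((a, true) ∈ S2 ↔ a ∈ T) := by
    intro a
    simp [hS2]
  have hmem : ∀ x : V × Bool, x ∈ S2 ↔ (x.2 = false ∨ x.1 ∈ T) := by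
    rintro ⟨a, (_ | _)⟩
    · simp [hmemf a]
    · simp [hmemt a]
  have hcard : S2.card = Fintype.card V + G.totalMutualVisibilityNumber := by
    rw [hS2, Finset.card_union_of_disjoint, Finset.card_image_of_injective,
      Finset.card_image_of_injective, Finset.card_univ, hTcard]
    · intro a b h; exact (Prod.mk.injEq _ _ _ _).mp h |>.1
    · intro a b h; exact (Prod.mk.injEq _ _ _ _).mp h |>.1
    · rw [Finset.disjoint_left]
      rintro x hx1 hx2
      simp only [Finset.mem_image] at hx1 hx2
      obtain ⟨a, -, rfl⟩ := hx1
      obtain ⟨b, -, hb⟩ := hx2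
      exact Bool.false_ne_true (congrArg Prod.snd hb.symm)
  have hMV : G.doubleGraph.IsMVSet ↑S2 := by
    rintro ⟨a, ba⟩ hu ⟨b2, bb⟩ hv huv
    by_cases hab : a = b2
    · -- same base vertex, different bools
      subst hab
      have hba : ba ≠ bb := fun hh => huv (by rw [hh])
      have haT : a ∈ T := by
        cases ba <;> cases bb
        · exact absurd rfl hba
        · exact (hmemt a).mp (Finset.mem_coe.mp hv)
        · exact (hmemt a).mp (Finset.mem_coe.mp hu)
        · exact absurd rfl hba
      obtain ⟨w, hadj, hwT⟩ := DoubleAux.exists_nbr_not_mem hconn hnc hT haT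
      set W : G.doubleGraph.Walk (a, ba) (a, bb) :=
        Walk.cons (show G.doubleGraph.Adj (a, ba) (w, true) from hadj)
          (Walk.cons (show G.doubleGraph.Adj (w, true) (a, bb) from hadj.symm) Walk.nil)
        with hWdef
      refine ⟨W, ⟨?_, ?_⟩, ?_⟩
      · rw [Walk.isPath_def]
        simp only [hWdef, Walk.support_cons, Walk.support_nil]
        refine List.nodup_cons.mpr ⟨?_, List.nodup_cons.mpr ⟨?_, List.nodup_singleton _⟩⟩
        · simp only [List.mem_cons, List.mem_singleton]
          rintro (h | h | h)
          · exact hadj.ne (congrArg Prod.fst h)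
          · exact hba (congrArg Prod.snd h)
          · cases h
        · simp only [List.mem_singleton]
          intro h
          exact hadj.ne (congrArg Prod.fst h).symm
      · have hdle : G.doubleGraph.dist (a, ba) (a, bb) ≤ W.length := SimpleGraph.dist_le W
        have h0 : 0 < G.doubleGraph.dist (a, ba) (a, bb) :=
          SimpleGraph.Reachable.pos_dist_of_ne ⟨W⟩ huv
        have h1 : G.doubleGraph.dist (a, ba) (a, bb) ≠ 1 := by
          intro hh
          have hadj' := SimpleGraph.dist_eq_one_iff_adj.mp hh
          exact G.loopless.irrefl a hadj'
        have h2 : W.length = 2 := rfl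
        omega
      · intro x hx hx1 hx2
        simp only [hWdef, Walk.support_cons, Walk.support_nil, List.mem_cons,
          List.mem_singleton] at hx
        rcases hx with h | h | h | h
        · exact absurd h hx1
        · subst h
          intro hmem'
          exact hwT ((hmemt w).mp hmem')
        · exact absurd h hx2
        · cases h
    · -- different base vertices
      obtain ⟨p, hp, hint⟩ := hT a b2 hab
      obtain ⟨W, hW, hWint⟩ := DoubleAux.exists_lift hab p hp hint ba bb
      refine ⟨W, hW, ?_⟩
      intro x hx hx1 hx2
      obtain ⟨hxt, hxT⟩ := hWint x hx hx1 hx2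
      intro hmem'
      rw [Finset.mem_coe, hmem x] at hmem'
      rcases hmem' with h | h
      · rw [hxt] at h; cases h
      · exact hxT h
  calc Fintype.card V + G.totalMutualVisibilityNumber = S2.card := hcard.symm
    _ ≤ G.doubleGraph.mutualVisibilityNumber := by
        apply le_csSup
        · exact ⟨Fintype.card (V × Bool), fun k ⟨S, _, hc⟩ => hc ▸ S.card_le_univ⟩
        · exact ⟨S2, hMV, rfl⟩
end

section
/- For every connected graph G, gp(G) ≤ gp(D(G)) ≤ 2·gp(G). -/
open SimpleGraph

variable {V : Type*}

section Aux

variable {V : Type*} (G : SimpleGraph V)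

/-- The projection homomorphism from the double graph to `G`. -/
def dgFst : G.doubleGraph →g G := ⟨Prod.fst, fun h => h⟩

/-- The lift homomorphism `G → D(G)` along a boolean labelling `σ`. -/
def dgLift (σ : V → Bool) : G →g G.doubleGraph := ⟨fun v => (v, σ v), fun h => h⟩

lemma dgLift_injective (σ : V → Bool) : Function.Injective (dgLift G σ) := by
  intro a b h
  exact congrArg Prod.fst h

variable {G}

lemma dist_le_of_doubleWalk {a b : V × Bool} (q : G.doubleGraph.Walk a b) :
    G.dist a.1 b.1 ≤ q.length := by
  have h := SimpleGraph.dist_le (q.map (dgFst G))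
  rwa [SimpleGraph.Walk.length_map] at h

lemma double_dist_eq (hconn : G.Connected) {u v : V} (b c : Bool) (huv : u ≠ v) :
    G.doubleGraph.dist (u, b) (v, c) = G.dist u v := by
  classical
  obtain ⟨p, hpl⟩ := hconn.exists_walk_length_eq_dist u v
  set σ : V → Bool := fun w => if w = u then b else c with hσ
  have hu : (dgLift G σ) u = (u, b) := by
    show (u, σ u) = (u, b)
    simp [hσ]
  have hv : (dgLift G σ) v = (v, c) := by
    show (v, σ v) = (v, c)
    simp [hσ, Ne.symm huv]
  have hle : G.doubleGraph.dist (u, b) (v, c) ≤ G.dist u v := by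
    have h1 := SimpleGraph.dist_le ((p.map (dgLift G σ)).copy hu hv)
    rwa [SimpleGraph.Walk.length_copy, SimpleGraph.Walk.length_map, hpl] at h1
  refine le_antisymm hle ?_
  obtain ⟨q, hq⟩ :=
    SimpleGraph.Reachable.exists_walk_length_eq_dist ⟨(p.map (dgLift G σ)).copy hu hv⟩
  calc G.dist u v ≤ q.length := dist_le_of_doubleWalk q
    _ = _ := hq

/-- General position sets of `G` lift to the double graph. -/
lemma isGPSet_double (hconn : G.Connected) {S : Set V} (hS : G.IsGPSet S) :
    G.doubleGraph.IsGPSet ((fun v => (v, false)) '' S) := by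
  rintro a b q ⟨hqpath, hqdist⟩ x' hx' y' hy' z' hz' hxy hxz hyz ⟨hxs, hys, hzs⟩
  obtain ⟨x, hxS, rfl⟩ := hx'
  obtain ⟨y, hyS, rfl⟩ := hy'
  obtain ⟨z, hzS, rfl⟩ := hz'
  have hxy' : x ≠ y := fun h => hxy (by rw [h])
  have hxz' : x ≠ z := fun h => hxz (by rw [h])
  have hyz' : y ≠ z := fun h => hyz (by rw [h])
  by_cases hab : a.1 = b.1
  · -- endpoints project to the same vertex of G; then q has length exactly 2
    cases q with
    | nil =>
      simp only [SimpleGraph.Walk.support_nil, List.mem_singleton] at hxs hys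
      exact hxy (hxs.trans hys.symm)
    | cons h q' =>
      rename_i w
      have hab' : a ≠ b := by
        intro hEq
        subst hEq
        rw [SimpleGraph.Walk.cons_isPath_iff] at hqpath
        exact hqpath.2 (SimpleGraph.Walk.end_mem_support q')
      have hdle : G.doubleGraph.dist a b ≤ 2 := by
        have h2 : G.doubleGraph.Adj w b := by
          show G.Adj w.1 b.1
          rw [← hab]
          exact (show G.Adj a.1 w.1 from h).symm
        calc G.doubleGraph.dist a b
            ≤ (SimpleGraph.Walk.cons h (SimpleGraph.Walk.cons h2 SimpleGraph.Walk.nil)).length :=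
              SimpleGraph.dist_le _
          _ = 2 := by simp
      cases q' with
      | nil =>
        have h' : G.Adj a.1 b.1 := h
        rw [← hab] at h'
        exact G.irrefl h'
      | cons h2 q'' =>
        rename_i m
        have hq'' : q''.length = 0 := by
          have hl := hqdist
          simp only [SimpleGraph.Walk.length_cons] at hl
          omega
        cases q'' with
        | nil =>
          -- support is [a, w, b]
          simp only [SimpleGraph.Walk.support_cons, SimpleGraph.Walk.support_nil,
            List.mem_cons, List.mem_singleton, List.not_mem_nil, or_false] at hxs hys hzs
          have hab2 : a.2 ≠ b.2 := by
            intro h22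
            exact hab' (Prod.ext hab h22)
          rcases hxs with hxs | hxs | hxs <;> rcases hys with hys | hys | hys <;>
            rcases hzs with hzs | hzs | hzs <;>
            first
            | (exact hxy (hxs.trans hys.symm))
            | (exact hxz (hxs.trans hzs.symm))
            | (exact hyz (hys.trans hzs.symm))
            | (exact hab2 (by rw [← hxs, ← hys]))
            | (exact hab2 (by rw [← hxs, ← hzs]))
            | (exact hab2 (by rw [← hys, ← hxs]))
            | (exact hab2 (by rw [← hys, ← hzs]))
        | cons _ _ => simp [SimpleGraph.Walk.length_cons] at hq''
  · -- endpoints project to distinct vertices: project q to a shortest path of G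
    have hWlen : (q.map (dgFst G)).length = G.dist a.1 b.1 := by
      rw [SimpleGraph.Walk.length_map, hqdist]
      exact double_dist_eq hconn a.2 b.2 hab
    have hWpath : (q.map (dgFst G)).IsPath :=
      SimpleGraph.Walk.isPath_of_length_eq_dist _ hWlen
    have hmem : ∀ w : V × Bool, w ∈ q.support → w.1 ∈ (q.map (dgFst G)).support := by
      intro w hw
      rw [SimpleGraph.Walk.support_map]
      exact List.mem_map.2 ⟨w, hw, rfl⟩
    exact hS (q.map (dgFst G)) ⟨hWpath, hWlen⟩ x hxS y hyS z hzS hxy' hxz' hyz'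
      ⟨hmem _ hxs, hmem _ hys, hmem _ hzs⟩

/-- General position sets of the double graph project to general position sets of `G`. -/
lemma isGPSet_of_double (hconn : G.Connected) {S : Set (V × Bool)}
    (hS : G.doubleGraph.IsGPSet S) : G.IsGPSet (Prod.fst '' S) := by
  rintro u v p ⟨hppath, hpdist⟩ x hx y hy z hz hxy hxz hyz ⟨hxs, hys, hzs⟩
  obtain ⟨x', hxS, hx1⟩ := hx
  obtain ⟨y', hyS, hy1⟩ := hy
  obtain ⟨z', hzS, hz1⟩ := hz
  have huv : u ≠ v := by
    intro hEq
    subst hEq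
    cases p with
    | nil =>
      simp only [SimpleGraph.Walk.support_nil, List.mem_singleton] at hxs hys
      exact hxy (hxs.trans hys.symm)
    | cons h q' =>
      rw [SimpleGraph.Walk.cons_isPath_iff] at hppath
      exact hppath.2 (SimpleGraph.Walk.end_mem_support q')
  classical
  set σ : V → Bool := fun w => if w = x then x'.2 else if w = y then y'.2 else z'.2 with hσ
  have hσx : σ x = x'.2 := by simp [hσ]
  have hσy : σ y = y'.2 := by simp [hσ, Ne.symm hxy]
  have hσz : σ z = z'.2 := by simp [hσ, Ne.symm hxz, Ne.symm hyz]
  set L := p.map (dgLift G σ) with hL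
  have hLpath : L.IsPath :=
    SimpleGraph.Walk.map_isPath_of_injective (dgLift_injective G σ) hppath
  have hLlen : L.length = G.doubleGraph.dist (u, σ u) (v, σ v) := by
    rw [hL, SimpleGraph.Walk.length_map, double_dist_eq hconn _ _ huv, hpdist]
  have hmem : ∀ w : V, w ∈ p.support → (w, σ w) ∈ L.support := by
    intro w hw
    rw [hL, SimpleGraph.Walk.support_map]
    exact List.mem_map.2 ⟨w, hw, rfl⟩
  have hx'' : x' = (x, σ x) := by rw [hσx, ← hx1]
  have hy'' : y' = (y, σ y) := by rw [hσy, ← hy1]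
  have hz'' : z' = (z, σ z) := by rw [hσz, ← hz1]
  refine hS L ⟨hLpath, hLlen⟩ (x, σ x) (hx'' ▸ hxS) (y, σ y) (hy'' ▸ hyS)
    (z, σ z) (hz'' ▸ hzS) ?_ ?_ ?_ ⟨hmem _ hxs, hmem _ hys, hmem _ hzs⟩
  · intro hEq; exact hxy (congrArg Prod.fst hEq)
  · intro hEq; exact hxz (congrArg Prod.fst hEq)
  · intro hEq; exact hyz (congrArg Prod.fst hEq)

end Aux


theorem gp_double_bounds [Fintype V] (G : SimpleGraph V) (hconn : G.Connected) :
    G.gpNumber ≤ G.doubleGraph.gpNumber ∧ G.doubleGraph.gpNumber ≤ 2 * G.gpNumber := by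
  classical
  have hbddG : BddAbove {k | ∃ S : Finset V, G.IsGPSet ↑S ∧ S.card = k} := by
    refine ⟨Fintype.card V, ?_⟩
    rintro k ⟨S, -, rfl⟩
    exact S.card_le_univ
  have hbddD : BddAbove
      {k | ∃ S : Finset (V × Bool), G.doubleGraph.IsGPSet ↑S ∧ S.card = k} := by
    refine ⟨Fintype.card (V × Bool), ?_⟩
    rintro k ⟨S, -, rfl⟩
    exact S.card_le_univ
  have hneG : {k | ∃ S : Finset V, G.IsGPSet ↑S ∧ S.card = k}.Nonempty := by
    refine ⟨0, ∅, ?_, by simp⟩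
    intro u v p hp x hx
    simp at hx
  have hneD : {k | ∃ S : Finset (V × Bool), G.doubleGraph.IsGPSet ↑S ∧ S.card = k}.Nonempty := by
    refine ⟨0, ∅, ?_, by simp⟩
    intro u v p hp x hx
    simp at hx
  constructor
  · obtain ⟨S, hS, hcard⟩ := Nat.sSup_mem hneG hbddG
    set T : Finset (V × Bool) := S.image (fun v => (v, false)) with hT
    have hTgp : G.doubleGraph.IsGPSet ↑T := by
      rw [hT, Finset.coe_image]
      exact isGPSet_double hconn hS
    have hTcard : T.card = S.card :=
      Finset.card_image_of_injective _ (fun a b h => congrArg Prod.fst h)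
    have h1 : G.gpNumber = T.card := by
      rw [hTcard]
      exact hcard.symm
    calc G.gpNumber = T.card := h1
      _ ≤ G.doubleGraph.gpNumber := le_csSup hbddD ⟨T, hTgp, rfl⟩
  · obtain ⟨S, hS, hcard⟩ := Nat.sSup_mem hneD hbddD
    set T : Finset V := S.image Prod.fst with hT
    have hTgp : G.IsGPSet ↑T := by
      rw [hT, Finset.coe_image]
      exact isGPSet_of_double hconn hS
    have hST : S.card ≤ 2 * T.card := by
      refine Finset.card_le_mul_card_image S 2 ?_
      intro b hb
      have hcb : (S.filter fun x => x.1 = b).card ≤ (Finset.univ : Finset Bool).card := by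
        refine Finset.card_le_card_of_injOn (fun x => x.2) (fun x _ => Finset.mem_univ _) ?_
        intro p hp q hq hpq
        simp only [Finset.coe_filter, Set.mem_setOf_eq] at hp hq
        exact Prod.ext (hp.2.trans hq.2.symm) hpq
      simpa using hcb
    calc G.doubleGraph.gpNumber = S.card := hcard.symm
      _ ≤ 2 * T.card := hST
      _ ≤ 2 * G.gpNumber := Nat.mul_le_mul_left 2 (le_csSup hbddG ⟨T, hTgp, rfl⟩)
end

section
/- For every n ≥ 3, gp(D(P_n)) = 4, and for every n ≥ 6, gp(D(C_n)) = 6. -/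
open SimpleGraph

variable {V : Type*}

section Aux

open SimpleGraph Walk

variable {W : Type*} {G : SimpleGraph W}

@[simp] lemma doubleGraph_adj {x y : W × Bool} :
    G.doubleGraph.Adj x y ↔ G.Adj x.1 y.1 := Iff.rfl

/-- Projection homomorphism from the double graph. -/
def fstHom (G : SimpleGraph W) : G.doubleGraph →g G := ⟨Prod.fst, fun h => h⟩

/-- Inclusion of `G` into its double graph at level `c`. -/
def inclHom (G : SimpleGraph W) (c : Bool) : G →g G.doubleGraph := ⟨fun v => (v, c), fun h => h⟩

lemma exists_lift {a b : W} (hab : a ≠ b) (hr : G.Reachable a b) (ba bb : Bool) :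
    ∃ L : G.doubleGraph.Walk (a, ba) (b, bb), L.length = G.dist a b := by
  obtain ⟨p, hp⟩ := hr.exists_walk_length_eq_dist
  cases p with
  | nil => exact absurd rfl hab
  | cons h q =>
    rename_i w
    refine ⟨Walk.cons (show G.doubleGraph.Adj (a, ba) (w, bb) from h) (q.map (inclHom G bb)), ?_⟩
    show (q.map (inclHom G bb)).length + 1 = _
    simpa using hp

lemma dist_double {a b : W} (hab : a ≠ b) (hr : G.Reachable a b) (ba bb : Bool) :
    G.doubleGraph.dist (a, ba) (b, bb) = G.dist a b := by
  obtain ⟨L, hL⟩ := exists_lift hab hr ba bb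
  refine le_antisymm (hL ▸ dist_le L) ?_
  obtain ⟨P, hP⟩ := L.reachable.exists_walk_length_eq_dist
  calc G.dist a b ≤ (P.map (fstHom G)).length := dist_le _
    _ = G.doubleGraph.dist (a, ba) (b, bb) := by rw [Walk.length_map, hP]

/-- If `b` lies on a shortest `a,c`-path in `G`, then no general position set of the
double graph can contain lifts of all of `a`, `b`, `c`. -/
lemma kill3 (hconn : G.Connected) {S : Set (W × Bool)} (hGP : G.doubleGraph.IsGPSet S)
    {a b c : W} {ba bb bc : Bool} (ha : (a, ba) ∈ S) (hb : (b, bb) ∈ S) (hc : (c, bc) ∈ S)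
    (hab : a ≠ b) (hac : a ≠ c) (hbc : b ≠ c)
    (q : G.Walk a c) (hq : q.length = G.dist a c) (hbq : b ∈ q.support) : False := by
  classical
  have h1 : G.dist a b ≤ (q.takeUntil b hbq).length := dist_le _
  have h2 : G.dist b c ≤ (q.dropUntil b hbq).length := dist_le _
  have hsum : (q.takeUntil b hbq).length + (q.dropUntil b hbq).length = q.length := by
    conv_rhs => rw [← q.take_spec hbq]
    rw [Walk.length_append]
  have htri : G.dist a c ≤ G.dist a b + G.dist b c := hconn.dist_triangle
  have hq1 : (q.takeUntil b hbq).length = G.dist a b := by omega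
  have hq2 : (q.dropUntil b hbq).length = G.dist b c := by omega
  have hd1 : 0 < G.dist a b := by
    rcases Nat.eq_zero_or_pos (G.dist a b) with h | h
    · exact absurd ((hconn.dist_eq_zero_iff).mp h) hab
    · exact h
  have hd2 : 0 < G.dist b c := by
    rcases Nat.eq_zero_or_pos (G.dist b c) with h | h
    · exact absurd ((hconn.dist_eq_zero_iff).mp h) hbc
    · exact h
  -- destructure the two legs
  obtain ⟨w1, h1', r1, hr1⟩ : ∃ (w1 : W) (h1' : G.Adj a w1) (r1 : G.Walk w1 b),
      (Walk.cons h1' r1).length = G.dist a b := by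
    cases hq1' : q.takeUntil b hbq with
    | nil => rw [hq1'] at hq1; simp at hq1; omega
    | cons h r => exact ⟨_, h, r, by rw [← hq1', hq1]⟩
  obtain ⟨w2, h2', r2, hr2⟩ : ∃ (w2 : W) (h2' : G.Adj b w2) (r2 : G.Walk w2 c),
      (Walk.cons h2' r2).length = G.dist b c := by
    cases hq2' : q.dropUntil b hbq with
    | nil => rw [hq2'] at hq2; simp at hq2; omega
    | cons h r => exact ⟨_, h, r, by rw [← hq2', hq2]⟩
  -- lift to the double graph
  let L : G.doubleGraph.Walk (a, ba) (c, bc) :=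
    (Walk.cons (doubleGraph_adj.mpr h1' : G.doubleGraph.Adj (a, ba) (w1, bb)) (r1.map (inclHom G bb))).append
      (Walk.cons (doubleGraph_adj.mpr h2' : G.doubleGraph.Adj (b, bb) (w2, bc)) (r2.map (inclHom G bc)))
  have hrab : G.Reachable a c := q.reachable
  have hLlen : L.length = G.doubleGraph.dist (a, ba) (c, bc) := by
    rw [dist_double hac hrab]
    simp only [L, Walk.length_append, Walk.length_cons, Walk.length_map]
    simp only [Walk.length_cons] at hr1 hr2
    erw [Walk.length_cons, Walk.length_cons, Walk.length_map, Walk.length_map]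
    omega
  have hmemb : (b, bb) ∈ L.support := by
    rw [Walk.mem_support_append_iff]
    exact Or.inr (Walk.start_mem_support _)
  exact hGP L ⟨L.isPath_of_length_eq_dist hLlen, hLlen⟩ (a, ba) ha (b, bb) hb (c, bc) hc
    (fun h => hab (congrArg Prod.fst h)) (fun h => hac (congrArg Prod.fst h))
    (fun h => hbc (congrArg Prod.fst h))
    ⟨Walk.start_mem_support _, hmemb, Walk.end_mem_support _⟩

end Aux
section Aux2

open SimpleGraph Walk

variable {W : Type*} {G : SimpleGraph W}

lemma isPath_eq_nil {u : W} {p : G.Walk u u} (hp : p.IsPath) : p = Walk.nil := by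
  cases p with
  | nil => rfl
  | cons h q =>
    exfalso
    have := hp.support_nodup
    rw [Walk.support_cons] at this
    exact (List.nodup_cons.mp this).1 (Walk.end_mem_support q)

/-- If `X` is an independent general position set of `G`, then `X × Bool` is a general
position set of the double graph. -/
lemma double_gp {X : Set W} (hGP : G.IsGPSet X)
    (hind : ∀ x ∈ X, ∀ y ∈ X, ¬ G.Adj x y) :
    G.doubleGraph.IsGPSet (X ×ˢ (Set.univ : Set Bool)) := by
  rintro u v p hp x hx y hy z hz hxy hxz hyz ⟨hxs, hys, hzs⟩
  rw [Set.mem_prod] at hx hy hz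
  by_cases huv : u = v
  · subst huv
    have := isPath_eq_nil hp.1
    subst this
    simp only [Walk.support_nil, List.mem_singleton] at hxs hys
    exact hxy (hxs.trans hys.symm)
  by_cases h1 : u.1 = v.1
  · -- distance-2 case
    obtain ⟨m, hm, q, rfl⟩ : ∃ (m : W × Bool) (hm : G.doubleGraph.Adj u m)
        (q : G.doubleGraph.Walk m v), p = Walk.cons hm q := by
      cases p with
      | nil => exact absurd rfl huv
      | cons h q => exact ⟨_, h, q, rfl⟩
    have hdle : G.doubleGraph.dist u v ≤ 2 := by
      have hadj2 : G.doubleGraph.Adj m v := by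
        rw [doubleGraph_adj] at hm ⊢
        rw [← h1]
        exact hm.symm
      calc G.doubleGraph.dist u v
          ≤ (Walk.cons hm (Walk.cons hadj2 Walk.nil)).length := dist_le _
        _ = 2 := by simp
    have hdne0 : G.doubleGraph.dist u v ≠ 0 := fun h =>
      huv (((Walk.cons hm q).reachable.dist_eq_zero_iff).mp h)
    have hdne1 : G.doubleGraph.dist u v ≠ 1 := by
      intro h
      have := dist_eq_one_iff_adj.mp h
      rw [doubleGraph_adj, h1] at this
      exact G.irrefl this
    have hlen : (Walk.cons hm q).length = 2 := by
      rw [hp.2]; omega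
    -- q must have length 1
    obtain ⟨hmv, rfl⟩ : ∃ (hmv : G.doubleGraph.Adj m v), q = Walk.cons hmv Walk.nil := by
      cases q with
      | nil => simp at hlen
      | cons h r =>
        cases r with
        | nil => exact ⟨h, rfl⟩
        | cons h' r' => simp [Walk.length_cons] at hlen
    simp only [Walk.support_cons, Walk.support_nil, List.mem_cons, List.mem_singleton,
      List.not_mem_nil, or_false] at hxs hys hzs
    -- x, y, z are exactly u, m, v in some order
    have hadj1 : G.Adj u.1 m.1 := hm
    have key : False := by
      have hmem : ∀ w : W × Bool, w = u ∨ w = m ∨ w = v → w.1 ∈ X → w.1 ∈ X := fun _ _ h => h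
      -- one of x,y,z equals m, and one equals u or v
      have hmX : m.1 ∈ X := by
        rcases hxs with rfl | rfl | rfl
        · rcases hys with rfl | rfl | rfl
          · exact absurd rfl hxy
          · exact hy.1
          · rcases hzs with rfl | rfl | rfl
            · exact absurd rfl hxz
            · exact hz.1
            · exact absurd rfl hyz
        · exact hx.1
        · rcases hys with rfl | rfl | rfl
          · rcases hzs with rfl | rfl | rfl
            · exact absurd rfl hyz
            · exact hz.1
            · exact absurd rfl hxz
          · exact hy.1
          · exact absurd rfl hxy
      have huX : u.1 ∈ X := by
        rcases hxs with rfl | rfl | rfl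
        · exact hx.1
        · rcases hys with rfl | rfl | rfl
          · exact hy.1
          · exact absurd rfl hxy
          · rcases hzs with rfl | rfl | rfl
            · exact hz.1
            · exact absurd rfl hxz
            · exact absurd rfl hyz
        · rw [h1]; exact hx.1
      exact hind u.1 huX m.1 hmX hadj1
    exact key
  · -- projections distinct case: project down
    have hlen' : (p.map (fstHom G)).length = G.dist u.1 v.1 := by
      have hr : G.Reachable u.1 v.1 := (p.map (fstHom G)).reachable
      have : G.doubleGraph.dist u v = G.dist u.1 v.1 := by
        have := dist_double (G := G) h1 hr u.2 v.2
        simpa using this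
      rw [Walk.length_map, hp.2, this]
    have hpath : (p.map (fstHom G)).IsPath := Walk.isPath_of_length_eq_dist _ hlen'
    have hnodup := hpath.support_nodup
    rw [Walk.support_map] at hnodup
    have hinj := List.inj_on_of_nodup_map hnodup
    have hxy1 : x.1 ≠ y.1 := fun h => hxy (hinj hxs hys h)
    have hxz1 : x.1 ≠ z.1 := fun h => hxz (hinj hxs hzs h)
    have hyz1 : y.1 ≠ z.1 := fun h => hyz (hinj hys hzs h)
    refine hGP (p.map (fstHom G)) ⟨hpath, hlen'⟩ x.1 hx.1 y.1 hy.1 z.1 hz.1 hxy1 hxz1 hyz1 ?_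
    rw [Walk.support_map]
    exact ⟨List.mem_map_of_mem hxs, List.mem_map_of_mem hys, List.mem_map_of_mem hzs⟩

end Aux2
section Aux3

open SimpleGraph Walk

variable {W : Type*} {G : SimpleGraph W}

lemma split_dist [DecidableEq W] (hconn : G.Connected) {u v : W} (p : G.Walk u v)
    (hp : p.length = G.dist u v) {w : W} (hw : w ∈ p.support) :
    G.dist u w + G.dist w v = G.dist u v ∧
    (p.takeUntil w hw).length = G.dist u w ∧
    (p.dropUntil w hw).length = G.dist w v := by
  have h1 : G.dist u w ≤ (p.takeUntil w hw).length := dist_le _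
  have h2 : G.dist w v ≤ (p.dropUntil w hw).length := dist_le _
  have hsum : (p.takeUntil w hw).length + (p.dropUntil w hw).length = p.length := by
    conv_rhs => rw [← p.take_spec hw]
    rw [Walk.length_append]
  have htri : G.dist u v ≤ G.dist u w + G.dist w v := hconn.dist_triangle
  omega

lemma order_two [DecidableEq W] (hconn : G.Connected) {u v : W} (p : G.Walk u v)
    (hp : p.length = G.dist u v) {a b : W} (ha : a ∈ p.support) (hb : b ∈ p.support) :
    G.dist u a + G.dist a b = G.dist u b ∨ G.dist u b + G.dist b a = G.dist u a := by
  obtain ⟨hsa, hta, hda⟩ := split_dist hconn p hp ha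
  have hb' : b ∈ (p.takeUntil a ha).support ∨ b ∈ (p.dropUntil a ha).support := by
    rw [← Walk.mem_support_append_iff, p.take_spec ha]
    exact hb
  rcases hb' with hb' | hb'
  · right
    exact (split_dist hconn (p.takeUntil a ha) hta hb').1
  · left
    obtain ⟨hs2, _, _⟩ := split_dist hconn (p.dropUntil a ha) hda hb'
    obtain ⟨hsb, _, _⟩ := split_dist hconn p hp hb
    omega

lemma order_two' [DecidableEq W] (hconn : G.Connected) {u v : W} (p : G.Walk u v)
    (hp : p.length = G.dist u v) {a b : W} (ha : a ∈ p.support) (hb : b ∈ p.support)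
    (hlt : G.dist u a < G.dist u b) : G.dist u a + G.dist a b = G.dist u b := by
  rcases order_two hconn p hp ha hb with h | h
  · exact h
  · omega

/-- Any three distinct vertices on a common shortest path can be ordered so that the
middle one is metrically between the others. -/
lemma order_three [DecidableEq W] (hconn : G.Connected) {u v : W} (p : G.Walk u v)
    (hp : p.length = G.dist u v) {x y z : W} (hx : x ∈ p.support) (hy : y ∈ p.support)
    (hz : z ∈ p.support) (hxy : x ≠ y) (hxz : x ≠ z) (hyz : y ≠ z) :
    G.dist x y + G.dist y z = G.dist x z ∨
    G.dist y x + G.dist x z = G.dist y z ∨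
    G.dist x z + G.dist z y = G.dist x y := by
  have hne : ∀ {a b : W}, a ∈ p.support → b ∈ p.support → a ≠ b →
      G.dist u a ≠ G.dist u b := by
    intro a b ha hb hab h
    rcases order_two hconn p hp ha hb with h' | h'
    · have : G.dist a b = 0 := by omega
      exact hab (hconn.dist_eq_zero_iff.mp this)
    · have : G.dist b a = 0 := by omega
      exact hab.symm (hconn.dist_eq_zero_iff.mp this)
  have hxy' := hne hx hy hxy
  have hxz' := hne hx hz hxz
  have hyz' := hne hy hz hyz
  have cxy : G.dist x y = G.dist y x := dist_comm
  have cxz : G.dist x z = G.dist z x := dist_comm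
  have cyz : G.dist y z = G.dist z y := dist_comm
  rcases lt_trichotomy (G.dist u x) (G.dist u y) with h1 | h1 | h1
  · rcases lt_trichotomy (G.dist u y) (G.dist u z) with h2 | h2 | h2
    · -- x < y < z
      left
      have e1 := order_two' hconn p hp hx hy h1
      have e2 := order_two' hconn p hp hy hz h2
      have e3 := order_two' hconn p hp hx hz (h1.trans h2)
      omega
    · exact absurd h2 hyz'
    · rcases lt_trichotomy (G.dist u x) (G.dist u z) with h3 | h3 | h3
      · -- x < z < y
        right; right
        have e1 := order_two' hconn p hp hx hz h3
        have e2 := order_two' hconn p hp hz hy h2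
        have e3 := order_two' hconn p hp hx hy h1
        omega
      · exact absurd h3 hxz'
      · -- z < x < y
        right; left
        have e1 := order_two' hconn p hp hz hx h3
        have e2 := order_two' hconn p hp hx hy h1
        have e3 := order_two' hconn p hp hz hy (h3.trans h1)
        omega
  · exact absurd h1 hxy'
  · rcases lt_trichotomy (G.dist u x) (G.dist u z) with h2 | h2 | h2
    · -- y < x < z
      right; left
      have e1 := order_two' hconn p hp hy hx h1
      have e2 := order_two' hconn p hp hx hz h2
      have e3 := order_two' hconn p hp hy hz (h1.trans h2)
      omega
    · exact absurd h2 hxz'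
    · rcases lt_trichotomy (G.dist u y) (G.dist u z) with h3 | h3 | h3
      · -- y < z < x
        right; right
        have e1 := order_two' hconn p hp hy hz h3
        have e2 := order_two' hconn p hp hz hx h2
        have e3 := order_two' hconn p hp hy hx h1
        omega
      · exact absurd h3 hyz'
      · -- z < y < x
        left
        have e1 := order_two' hconn p hp hz hy h3
        have e2 := order_two' hconn p hp hy hx h1
        have e3 := order_two' hconn p hp hz hx (h3.trans h1)
        omega

end Aux3
section Aux4

open SimpleGraph Walk
open scoped Fin.NatCast Fin.CommRing

-- `(N - a + b) % N` in closed form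
lemma md {N a b : ℕ} (ha : a < N) (hb : b < N) :
    (N - a + b) % N = if a ≤ b then b - a else N - a + b := by
  split
  · have h1 : N - a + b = N + (b - a) := by omega
    rw [h1, Nat.add_mod_left, Nat.mod_eq_of_lt (by omega)]
  · exact Nat.mod_eq_of_lt (by omega)

lemma fin_sub_val {N : ℕ} (a b : Fin N) :
    (a - b).val = if b.val ≤ a.val then a.val - b.val else N - b.val + a.val := by
  rw [Fin.sub_def]
  exact md b.isLt a.isLt

variable {m : ℕ}

lemma cyc_adj_succ (i : Fin (m + 2)) : (cycleGraph (m + 2)).Adj i (i + 1) := by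
  rw [cycleGraph_adj]
  right
  simp

/-- The walk `i, i+1, ..., i+ℓ` around the cycle. -/
def cWalk : (ℓ : ℕ) → (i : Fin (m + 2)) → (cycleGraph (m + 2)).Walk i (i + (ℓ : Fin (m + 2)))
  | 0, i => Walk.nil.copy rfl (by simp)
  | (ℓ + 1), i => ((Walk.cons (cyc_adj_succ i) (cWalk ℓ (i + 1))).copy rfl
      (by push_cast; ring))

@[simp] lemma cWalk_length (ℓ : ℕ) (i : Fin (m + 2)) : (cWalk ℓ i).length = ℓ := by
  induction ℓ generalizing i with
  | zero => simp [cWalk]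
  | succ ℓ ih => simp [cWalk, ih]

lemma cWalk_mem_support (ℓ : ℕ) (i : Fin (m + 2)) (k : ℕ) (hk : k ≤ ℓ) :
    i + (k : Fin (m + 2)) ∈ (cWalk ℓ i).support := by
  induction ℓ generalizing i k with
  | zero =>
    have : k = 0 := by omega
    subst this
    simp [cWalk]
  | succ ℓ ih =>
    rw [cWalk, Walk.support_copy, Walk.support_cons]
    rcases Nat.eq_zero_or_pos k with rfl | hk'
    · simp
    · obtain ⟨k', rfl⟩ : ∃ k', k = k' + 1 := ⟨k - 1, by omega⟩
      right
      have : i + ((k' + 1 : ℕ) : Fin (m + 2)) = (i + 1) + (k' : Fin (m + 2)) := by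
        push_cast; ring
      rw [this]
      exact ih (i + 1) k' (by omega)

/-- lower bound for walks in the cycle graph -/
lemma cyc_walk_length_lb {u v : Fin (m + 2)} (p : (cycleGraph (m + 2)).Walk u v) :
    min (v - u).val (u - v).val ≤ p.length := by
  induction p with
  | nil => simp
  | @cons a b c h q ih =>
    rw [Walk.length_cons]
    have h' := cycleGraph_adj.mp h
    have key : ∀ δ ε : Fin (m + 2), (ε - δ = 1 ∨ δ - ε = 1) →
        min δ.val ((0 : Fin (m+2)) - δ).val ≤ min ε.val ((0 : Fin (m+2)) - ε).val + 1 := by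
      intro δ ε hδε
      have h1 := fin_sub_val ((0 : Fin (m+2))) δ
      have h2 := fin_sub_val ((0 : Fin (m+2))) ε
      have h0 : ((0 : Fin (m+2))).val = 0 := rfl
      rcases hδε with h | h
      · have h3 := fin_sub_val ε δ
        rw [h] at h3
        have h4 : ((1 : Fin (m+2))).val = 1 := by
          rw [Fin.val_one]
        have hδ := δ.isLt
        have hε := ε.isLt
        rw [h4] at h3
        rw [h0] at h1 h2
        split at h1 <;> split at h2 <;> split at h3 <;> omega
      · have h3 := fin_sub_val δ ε
        rw [h] at h3
        have h4 : ((1 : Fin (m+2))).val = 1 := by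
          rw [Fin.val_one]
        have hδ := δ.isLt
        have hε := ε.isLt
        rw [h4] at h3
        rw [h0] at h1 h2
        split at h1 <;> split at h2 <;> split at h3 <;> omega
    have e3 : (c - b) - (c - a) = a - b := by ring
    have e4 : (c - a) - (c - b) = b - a := by ring
    have keyuse := key (c - a) (c - b) (by rw [e3, e4]; exact h')
    have e1 : (0 : Fin (m+2)) - (c - a) = a - c := by ring
    have e2 : (0 : Fin (m+2)) - (c - b) = b - c := by ring
    rw [e1, e2] at keyuse
    omega

end Aux4
section Aux5

open SimpleGraph Walk
open scoped Fin.NatCast Fin.CommRing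

variable {m : ℕ}

lemma cyc_dist (u v : Fin (m + 2)) :
    (cycleGraph (m + 2)).dist u v = min (v - u).val (u - v).val := by
  have w1 : (cycleGraph (m + 2)).Walk u v :=
    (cWalk (v - u).val u).copy rfl (by rw [Fin.cast_val_eq_self]; ring)
  have w2 : (cycleGraph (m + 2)).Walk v u :=
    (cWalk (u - v).val v).copy rfl (by rw [Fin.cast_val_eq_self]; ring)
  have hle1 : (cycleGraph (m + 2)).dist u v ≤ (v - u).val := by
    have := dist_le ((cWalk (v - u).val u).copy rfl
      (show u + ((v - u).val : Fin (m+2)) = v by rw [Fin.cast_val_eq_self]; ring))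
    simpa using this
  have hle2 : (cycleGraph (m + 2)).dist u v ≤ (u - v).val := by
    rw [SimpleGraph.dist_comm]
    have := dist_le ((cWalk (u - v).val v).copy rfl
      (show v + ((u - v).val : Fin (m+2)) = u by rw [Fin.cast_val_eq_self]; ring))
    simpa using this
  have hge : min (v - u).val (u - v).val ≤ (cycleGraph (m + 2)).dist u v := by
    obtain ⟨p, hp⟩ := w1.reachable.exists_walk_length_eq_dist
    rw [← hp]
    exact cyc_walk_length_lb p
  omega

lemma cyc_collinear {a b c : Fin (m + 2)} (hac : a ≠ c)
    (hsum : (b - a).val + (c - b).val = (c - a).val) (h2 : 2 * (c - a).val ≤ m + 2) :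
    ∃ q : (cycleGraph (m + 2)).Walk a c,
      q.length = (cycleGraph (m + 2)).dist a c ∧ b ∈ q.support := by
  refine ⟨(cWalk (c - a).val a).copy rfl (by rw [Fin.cast_val_eq_self]; ring), ?_, ?_⟩
  · rw [Walk.length_copy, cWalk_length, cyc_dist]
    have h3 := fin_sub_val c a
    have h4 := fin_sub_val a c
    have hval : a.val ≠ c.val := fun h => hac (Fin.val_injective h)
    have hA := a.isLt
    have hC := c.isLt
    split at h3 <;> split at h4 <;> omega
  · rw [Walk.support_copy]
    have hb : b = a + (((b - a).val : ℕ) : Fin (m + 2)) := by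
      rw [Fin.cast_val_eq_self]; ring
    rw [hb]
    exact cWalk_mem_support _ _ _ (by omega)

end Aux5
section Aux6

open SimpleGraph Walk

variable {n : ℕ}

lemma path_adj_succ (i : Fin n) (h : i.val + 1 < n) :
    (pathGraph n).Adj i ⟨i.val + 1, h⟩ := by
  rw [pathGraph_adj]
  left
  rfl

/-- The walk `i, i+1, ..., i+ℓ` in the path graph. -/
def pWalk : (ℓ : ℕ) → (i : Fin n) → (h : i.val + ℓ < n) →
    (pathGraph n).Walk i ⟨i.val + ℓ, h⟩
  | 0, i, h => Walk.nil.copy rfl (by ext; simp)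
  | (ℓ + 1), i, h =>
    (Walk.cons (path_adj_succ i (by omega)) (pWalk ℓ ⟨i.val + 1, by omega⟩ (by simp; omega))).copy
      rfl (by ext; simp; omega)

@[simp] lemma pWalk_length (ℓ : ℕ) (i : Fin n) (h : i.val + ℓ < n) :
    (pWalk ℓ i h).length = ℓ := by
  induction ℓ generalizing i with
  | zero => simp [pWalk]
  | succ ℓ ih => simp [pWalk, ih]

lemma pWalk_mem_support (ℓ : ℕ) (i : Fin n) (h : i.val + ℓ < n) (k : ℕ) (hk : k ≤ ℓ)
    (h2 : i.val + k < n) : (⟨i.val + k, h2⟩ : Fin n) ∈ (pWalk ℓ i h).support := by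
  induction ℓ generalizing i k with
  | zero =>
    have : k = 0 := by omega
    subst this
    simp [pWalk]
  | succ ℓ ih =>
    rw [pWalk, Walk.support_copy, Walk.support_cons]
    rcases Nat.eq_zero_or_pos k with rfl | hk'
    · have he0 : (⟨i.val + 0, h2⟩ : Fin n) = i := Fin.eq_of_val_eq (by simp)
      rw [he0]
      exact List.mem_cons_self
    · obtain ⟨k', rfl⟩ : ∃ k', k = k' + 1 := ⟨k - 1, by omega⟩
      right
      have he : (⟨i.val + (k' + 1), h2⟩ : Fin n) = ⟨(i.val + 1) + k', by omega⟩ := by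
        ext; simp; omega
      rw [he]
      exact ih ⟨i.val + 1, by omega⟩ (by simp; omega) k' (by omega) _

lemma path_walk_length_lb {u v : Fin n} (p : (pathGraph n).Walk u v) :
    u.val ≤ v.val + p.length ∧ v.val ≤ u.val + p.length := by
  induction p with
  | nil => simp
  | @cons a b c h q ih =>
    rw [pathGraph_adj] at h
    rw [Walk.length_cons]
    omega

lemma path_collinear {a b c : Fin n} (hab : a.val < b.val) (hbc : b.val < c.val) :
    ∃ q : (pathGraph n).Walk a c,
      q.length = (pathGraph n).dist a c ∧ b ∈ q.support := by
  have hc := c.isLt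
  have he : (⟨a.val + (c.val - a.val), by omega⟩ : Fin n) = c := by ext; simp; omega
  let q := (pWalk (c.val - a.val) a (by omega)).copy rfl he
  refine ⟨q, ?_, ?_⟩
  · have hle : (pathGraph n).dist a c ≤ q.length := dist_le q
    have hlen : q.length = c.val - a.val := by simp only [q, Walk.length_copy, pWalk_length]
    obtain ⟨p, hp⟩ := q.reachable.exists_walk_length_eq_dist
    have := path_walk_length_lb p
    omega
  · simp only [q, Walk.support_copy]
    have h2' : a.val + (b.val - a.val) < n := by omega
    have hmem := pWalk_mem_support (c.val - a.val) a (by omega) (b.val - a.val) (by omega) h2'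
    have hbeq : (⟨a.val + (b.val - a.val), h2'⟩ : Fin n) = b := Fin.eq_of_val_eq (by simp; omega)
    rwa [hbeq] at hmem

end Aux6
section Aux7

variable {α : Type*} [LinearOrder α] [DecidableEq α]

lemma exists_three_lt {T : Finset α} (h : 3 ≤ T.card) :
    ∃ a b c, a ∈ T ∧ b ∈ T ∧ c ∈ T ∧ a < b ∧ b < c := by
  have h0 : T.Nonempty := Finset.card_pos.mp (by omega)
  set a := T.min' h0 with ha
  have haT : a ∈ T := T.min'_mem h0
  set T1 := T.erase a with hT1
  have hT1card : 2 ≤ T1.card := by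
    rw [hT1, Finset.card_erase_of_mem haT]; omega
  have h1 : T1.Nonempty := Finset.card_pos.mp (by omega)
  set b := T1.min' h1 with hb
  have hbT1 : b ∈ T1 := T1.min'_mem h1
  set T2 := T1.erase b with hT2
  have hT2card : 1 ≤ T2.card := by
    rw [hT2, Finset.card_erase_of_mem hbT1]; omega
  have h2 : T2.Nonempty := Finset.card_pos.mp (by omega)
  set c := T2.min' h2 with hc
  have hcT2 : c ∈ T2 := T2.min'_mem h2
  have hbT : b ∈ T := Finset.mem_of_mem_erase hbT1
  have hcT1 : c ∈ T1 := Finset.mem_of_mem_erase hcT2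
  have hcT : c ∈ T := Finset.mem_of_mem_erase hcT1
  refine ⟨a, b, c, haT, hbT, hcT, ?_, ?_⟩
  · exact lt_of_le_of_ne (T.min'_le b hbT) (Ne.symm (Finset.ne_of_mem_erase hbT1))
  · exact lt_of_le_of_ne (T1.min'_le c hcT1) (Ne.symm (Finset.ne_of_mem_erase hcT2))

lemma exists_four_lt {T : Finset α} (h : 4 ≤ T.card) :
    ∃ a b c d, a ∈ T ∧ b ∈ T ∧ c ∈ T ∧ d ∈ T ∧ a < b ∧ b < c ∧ c < d := by
  have h0 : T.Nonempty := Finset.card_pos.mp (by omega)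
  set a := T.min' h0 with ha
  have haT : a ∈ T := T.min'_mem h0
  set T1 := T.erase a with hT1
  have hT1card : 3 ≤ T1.card := by
    rw [hT1, Finset.card_erase_of_mem haT]; omega
  obtain ⟨b, c, d, hb, hc, hd, hbc, hcd⟩ := exists_three_lt hT1card
  have hab : a < b :=
    lt_of_le_of_ne (T.min'_le b (Finset.mem_of_mem_erase hb)) (Ne.symm (Finset.ne_of_mem_erase hb))
  exact ⟨a, b, c, d, haT, Finset.mem_of_mem_erase hb, Finset.mem_of_mem_erase hc,
    Finset.mem_of_mem_erase hd, hab, hbc, hcd⟩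

lemma sSup_eq_of_mem_of_ub {A : Set ℕ} {k : ℕ} (hmem : k ∈ A) (hub : ∀ j ∈ A, j ≤ k) :
    sSup A = k :=
  le_antisymm (csSup_le ⟨k, hmem⟩ hub) (le_csSup ⟨k, fun j hj => hub j hj⟩ hmem)

end Aux7
section Aux8

open SimpleGraph Walk

lemma path_upper (m : ℕ) (S : Finset (Fin (m + 3) × Bool))
    (hS : (pathGraph (m + 3)).doubleGraph.IsGPSet ↑S) : S.card ≤ 4 := by
  classical
  set T := S.image Prod.fst with hT
  have hTcard : T.card ≤ 2 := by
    by_contra hT3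
    push_neg at hT3
    obtain ⟨a, b, c, haT, hbT, hcT, hab, hbc⟩ := exists_three_lt hT3
    obtain ⟨x, hxS, hx1⟩ := Finset.mem_image.mp haT
    obtain ⟨y, hyS, hy1⟩ := Finset.mem_image.mp hbT
    obtain ⟨z, hzS, hz1⟩ := Finset.mem_image.mp hcT
    have hxa : (a, x.2) ∈ S := by rw [← hx1]; exact hxS
    have hyb : (b, y.2) ∈ S := by rw [← hy1]; exact hyS
    have hzc : (c, z.2) ∈ S := by rw [← hz1]; exact hzS
    obtain ⟨q, hq, hbq⟩ := path_collinear (n := m + 3) hab hbc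
    exact kill3 (pathGraph_connected (m + 2)) hS (Finset.mem_coe.mpr hxa)
      (Finset.mem_coe.mpr hyb) (Finset.mem_coe.mpr hzc) (ne_of_lt hab)
      (ne_of_lt (hab.trans hbc)) (ne_of_lt hbc) q hq hbq
  have hsub : S ⊆ T ×ˢ (Finset.univ : Finset Bool) := by
    intro x hx
    rw [Finset.mem_product]
    exact ⟨Finset.mem_image_of_mem _ hx, Finset.mem_univ _⟩
  calc S.card ≤ (T ×ˢ (Finset.univ : Finset Bool)).card := Finset.card_le_card hsub
    _ = T.card * 2 := by rw [Finset.card_product, Finset.card_univ, Fintype.card_bool]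
    _ ≤ 4 := by omega

lemma path_lower (m : ℕ) :
    ∃ S : Finset (Fin (m + 3) × Bool),
      (pathGraph (m + 3)).doubleGraph.IsGPSet ↑S ∧ S.card = 4 := by
  classical
  set l : Fin (m + 3) := ⟨m + 2, by omega⟩ with hl
  have h0l : (0 : Fin (m + 3)) ≠ l := by
    intro h
    have := congrArg Fin.val h
    simp [hl] at this
  refine ⟨({0, l} : Finset (Fin (m + 3))) ×ˢ (Finset.univ : Finset Bool), ?_, ?_⟩
  · have hGP : (pathGraph (m + 3)).IsGPSet ↑({0, l} : Finset (Fin (m + 3))) := by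
      intro u v p hp x hx y hy z hz hxy hxz hyz
      intro _
      simp only [Finset.coe_insert, Finset.coe_singleton, Set.mem_insert_iff,
        Set.mem_singleton_iff] at hx hy hz
      rcases hx with rfl | rfl <;> rcases hy with rfl | rfl <;> rcases hz with rfl | rfl <;>
        first
          | exact hxy rfl
          | exact hxz rfl
          | exact hyz rfl
    have hind : ∀ x ∈ (↑({0, l} : Finset (Fin (m + 3))) : Set (Fin (m + 3))),
        ∀ y ∈ (↑({0, l} : Finset (Fin (m + 3))) : Set (Fin (m + 3))),
        ¬ (pathGraph (m + 3)).Adj x y := by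
      intro x hx y hy
      simp only [Finset.coe_insert, Finset.coe_singleton, Set.mem_insert_iff,
        Set.mem_singleton_iff] at hx hy
      rw [pathGraph_adj]
      rcases hx with rfl | rfl <;> rcases hy with rfl | rfl <;>
        simp only [hl, Fin.val_zero, Fin.val_mk] <;> omega
    have := double_gp hGP hind
    rwa [show (↑(({0, l} : Finset (Fin (m + 3))) ×ˢ (Finset.univ : Finset Bool)) :
        Set (Fin (m + 3) × Bool)) =
        (↑({0, l} : Finset (Fin (m + 3))) : Set (Fin (m + 3))) ×ˢ (Set.univ : Set Bool) from by
      rw [Finset.coe_product, Finset.coe_univ]]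
  · rw [Finset.card_product, Finset.card_univ, Fintype.card_bool,
      Finset.card_insert_of_notMem (by simpa using h0l), Finset.card_singleton]

end Aux8
section Aux9

open SimpleGraph Walk

variable {m : ℕ}

lemma cyc_dist' (u v : Fin (m + 6)) :
    (cycleGraph (m + 6)).dist u v = min (v - u).val (u - v).val :=
  cyc_dist (m := m + 4) u v

lemma cyc_collinear' {a b c : Fin (m + 6)} (hac : a ≠ c)
    (hsum : (b - a).val + (c - b).val = (c - a).val) (h2 : 2 * (c - a).val ≤ m + 6) :
    ∃ q : (cycleGraph (m + 6)).Walk a c,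
      q.length = (cycleGraph (m + 6)).dist a c ∧ b ∈ q.support :=
  cyc_collinear (m := m + 4) hac hsum h2

lemma cyc_conn : (cycleGraph (m + 6)).Connected := cycleGraph_connected (n := m + 5)

lemma cyc_upper (m : ℕ) (S : Finset (Fin (m + 6) × Bool))
    (hS : (cycleGraph (m + 6)).doubleGraph.IsGPSet ↑S) : S.card ≤ 6 := by
  classical
  set T := S.image Prod.fst with hT
  have hTcard : T.card ≤ 3 := by
    by_contra hT4
    push_neg at hT4
    obtain ⟨a, b, c, d, haT, hbT, hcT, hdT, hab, hbc, hcd⟩ := exists_four_lt hT4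
    obtain ⟨x, hxS, hx1⟩ := Finset.mem_image.mp haT
    obtain ⟨y, hyS, hy1⟩ := Finset.mem_image.mp hbT
    obtain ⟨z, hzS, hz1⟩ := Finset.mem_image.mp hcT
    obtain ⟨w, hwS, hw1⟩ := Finset.mem_image.mp hdT
    have hxa : (a, x.2) ∈ S := by rw [← hx1]; exact hxS
    have hyb : (b, y.2) ∈ S := by rw [← hy1]; exact hyS
    have hzc : (c, z.2) ∈ S := by rw [← hz1]; exact hzS
    have hwd : (d, w.2) ∈ S := by rw [← hw1]; exact hwS
    have hab' : a.val < b.val := hab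
    have hbc' : b.val < c.val := hbc
    have hcd' : c.val < d.val := hcd
    have hdlt := d.isLt
    by_cases hcase : 2 * (c.val - a.val) ≤ m + 6
    · have hsum : (b - a).val + (c - b).val = (c - a).val := by
        rw [fin_sub_val, fin_sub_val, fin_sub_val]
        split_ifs <;> omega
      have h2 : 2 * (c - a).val ≤ m + 6 := by
        rw [fin_sub_val]
        split_ifs <;> omega
      obtain ⟨q, hq, hbq⟩ := cyc_collinear' (ne_of_lt (hab.trans hbc)) hsum h2
      exact kill3 cyc_conn hS (Finset.mem_coe.mpr hxa) (Finset.mem_coe.mpr hyb)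
        (Finset.mem_coe.mpr hzc) (ne_of_lt hab) (ne_of_lt (hab.trans hbc)) (ne_of_lt hbc)
        q hq hbq
    · have hsum : (d - c).val + (a - d).val = (a - c).val := by
        rw [fin_sub_val, fin_sub_val, fin_sub_val]
        split_ifs <;> omega
      have h2 : 2 * (a - c).val ≤ m + 6 := by
        rw [fin_sub_val]
        split_ifs <;> omega
      obtain ⟨q, hq, hbq⟩ :=
        cyc_collinear' (ne_of_gt (hab.trans hbc) : c ≠ a) hsum h2
      exact kill3 cyc_conn hS (Finset.mem_coe.mpr hzc) (Finset.mem_coe.mpr hwd)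
        (Finset.mem_coe.mpr hxa) (ne_of_lt hcd) (ne_of_gt (hab.trans hbc))
        (ne_of_gt (hab.trans (hbc.trans hcd))) q hq hbq
  have hsub : S ⊆ T ×ˢ (Finset.univ : Finset Bool) := by
    intro x hx
    rw [Finset.mem_product]
    exact ⟨Finset.mem_image_of_mem _ hx, Finset.mem_univ _⟩
  calc S.card ≤ (T ×ˢ (Finset.univ : Finset Bool)).card := Finset.card_le_card hsub
    _ = T.card * 2 := by rw [Finset.card_product, Finset.card_univ, Fintype.card_bool]
    _ ≤ 6 := by omega

lemma cyc_gp_three (m : ℕ) :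
    ∃ X : Finset (Fin (m + 6)),
      X.card = 3 ∧ (cycleGraph (m + 6)).IsGPSet ↑X ∧
      (∀ x ∈ (↑X : Set (Fin (m + 6))), ∀ y ∈ (↑X : Set (Fin (m + 6))),
        ¬ (cycleGraph (m + 6)).Adj x y) := by
  classical
  set N := m + 6 with hN
  set H := (m + 6) / 2 - 1 with hH
  have hH2 : 2 ≤ H := by omega
  have h2H : 2 * H + 2 ≤ m + 6 := by omega
  set a1 : Fin (m + 6) := ⟨H, by omega⟩ with ha1
  set a2 : Fin (m + 6) := ⟨2 * H, by omega⟩ with ha2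
  have hv0 : (0 : Fin (m + 6)).val = 0 := rfl
  have hv1 : a1.val = H := rfl
  have hv2 : a2.val = 2 * H := rfl
  have h01 : (0 : Fin (m + 6)) ≠ a1 := fun h => by
    have := congrArg Fin.val h; rw [hv0, hv1] at this; omega
  have h02 : (0 : Fin (m + 6)) ≠ a2 := fun h => by
    have := congrArg Fin.val h; rw [hv0, hv2] at this; omega
  have h12 : a1 ≠ a2 := fun h => by
    have := congrArg Fin.val h; rw [hv1, hv2] at this; omega
  have d01 : (cycleGraph (m + 6)).dist 0 a1 = H := by
    rw [cyc_dist', fin_sub_val, fin_sub_val, hv0, hv1]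
    split_ifs <;> omega
  have d10 : (cycleGraph (m + 6)).dist a1 0 = H := by
    rw [cyc_dist', fin_sub_val, fin_sub_val, hv0, hv1]
    split_ifs <;> omega
  have d12 : (cycleGraph (m + 6)).dist a1 a2 = H := by
    rw [cyc_dist', fin_sub_val, fin_sub_val, hv1, hv2]
    split_ifs <;> omega
  have d21 : (cycleGraph (m + 6)).dist a2 a1 = H := by
    rw [cyc_dist', fin_sub_val, fin_sub_val, hv1, hv2]
    split_ifs <;> omega
  have d02 : (cycleGraph (m + 6)).dist 0 a2 = N - 2 * H := by
    rw [cyc_dist', fin_sub_val, fin_sub_val, hv0, hv2]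
    split_ifs <;> omega
  have d20 : (cycleGraph (m + 6)).dist a2 0 = N - 2 * H := by
    rw [cyc_dist', fin_sub_val, fin_sub_val, hv0, hv2]
    split_ifs <;> omega
  refine ⟨{0, a1, a2}, ?_, ?_, ?_⟩
  · rw [Finset.card_insert_of_notMem (by simp [h01, h02]),
      Finset.card_insert_of_notMem (by simp [h12]), Finset.card_singleton]
  · intro u v p hp x hx y hy z hz hxy hxz hyz
    rintro ⟨hxs, hys, hzs⟩
    have horder := order_three cyc_conn p hp.2 hxs hys hzs hxy hxz hyz
    simp only [Finset.coe_insert, Finset.coe_singleton, Set.mem_insert_iff,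
      Set.mem_singleton_iff] at hx hy hz
    rcases hx with rfl | rfl | rfl <;> rcases hy with rfl | rfl | rfl <;>
      rcases hz with rfl | rfl | rfl <;>
      first
        | exact hxy rfl
        | exact hxz rfl
        | exact hyz rfl
        | (rcases horder with h | h | h <;>
            simp only [d01, d10, d12, d21, d02, d20] at h <;> omega)
  · intro x hx y hy
    simp only [Finset.coe_insert, Finset.coe_singleton, Set.mem_insert_iff,
      Set.mem_singleton_iff] at hx hy
    rw [cycleGraph_adj']
    rintro (h | h) <;>
    · rcases hx with rfl | rfl | rfl <;> rcases hy with rfl | rfl | rfl <;>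
      · rw [fin_sub_val] at h
        simp only [hv0, hv1, hv2] at h
        split_ifs at h <;> omega

lemma cyc_lower (m : ℕ) :
    ∃ S : Finset (Fin (m + 6) × Bool),
      (cycleGraph (m + 6)).doubleGraph.IsGPSet ↑S ∧ S.card = 6 := by
  classical
  obtain ⟨X, hXcard, hXGP, hXind⟩ := cyc_gp_three m
  refine ⟨X ×ˢ (Finset.univ : Finset Bool), ?_, ?_⟩
  · have := double_gp hXGP hXind
    rwa [show (↑(X ×ˢ (Finset.univ : Finset Bool)) : Set (Fin (m + 6) × Bool)) =
        (↑X : Set (Fin (m + 6))) ×ˢ (Set.univ : Set Bool) from by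
      rw [Finset.coe_product, Finset.coe_univ]]
  · rw [Finset.card_product, Finset.card_univ, Fintype.card_bool, hXcard]

end Aux9
theorem gp_double_path_cycle :
    (∀ n : ℕ, 3 ≤ n → (SimpleGraph.pathGraph n).doubleGraph.gpNumber = 4) ∧
    (∀ n : ℕ, 6 ≤ n → (SimpleGraph.cycleGraph n).doubleGraph.gpNumber = 6) := by
  constructor
  · intro n hn
    obtain ⟨m, rfl⟩ : ∃ m, n = m + 3 := ⟨n - 3, by omega⟩
    unfold SimpleGraph.gpNumber
    apply sSup_eq_of_mem_of_ub
    · obtain ⟨S, hGP, hcard⟩ := path_lower m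
      exact ⟨S, hGP, hcard⟩
    · rintro j ⟨S, hGP, rfl⟩
      exact path_upper m S hGP
  · intro n hn
    obtain ⟨m, rfl⟩ : ∃ m, n = m + 6 := ⟨n - 6, by omega⟩
    unfold SimpleGraph.gpNumber
    apply sSup_eq_of_mem_of_ub
    · obtain ⟨S, hGP, hcard⟩ := cyc_lower m
      exact ⟨S, hGP, hcard⟩
    · rintro j ⟨S, hGP, rfl⟩
      exact cyc_upper m S hGP
end

section
/- If G is a graph with at least 2 vertices having a universal vertex, then the mutual-visibility number of the Mycielskian M(G) equals 2n(G) − 1. -/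
open SimpleGraph

variable {V : Type*}

section Aux

variable {W : Type*} {H : SimpleGraph W} {S : Set W} {u v w : W}

private lemma getVert_mem_support' (p : H.Walk u v) (i : ℕ) : p.getVert i ∈ p.support := by
  induction p generalizing i with
  | nil => cases i <;> simp [SimpleGraph.Walk.getVert]
  | cons h q ih =>
    cases i with
    | zero => simp [SimpleGraph.Walk.getVert]
    | succ n => simp only [SimpleGraph.Walk.getVert_cons_succ, Walk.support_cons,
        List.mem_cons]; exact Or.inr (ih n)

private lemma dist_eq_two' (huv : ¬H.Adj u v) (hne : u ≠ v) (h1 : H.Adj u w)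
    (h2 : H.Adj w v) : H.dist u v = 2 := by
  have hle : H.dist u v ≤ 2 := by
    have := H.dist_le (Walk.cons h1 (Walk.cons h2 Walk.nil))
    simpa using this
  have hr : H.Reachable u v := ⟨Walk.cons h1 (Walk.cons h2 Walk.nil)⟩
  have h0 : 0 < H.dist u v := hr.pos_dist_of_ne hne
  have h1' : H.dist u v ≠ 1 := fun h => huv (SimpleGraph.dist_eq_one_iff_adj.mp h)
  omega

private lemma svis_adj' (h : H.Adj u v) : H.SVisible S u v := by
  refine ⟨Walk.cons h Walk.nil, ⟨?_, ?_⟩, ?_⟩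
  · simp [Walk.isPath_def, h.ne]
  · rw [SimpleGraph.dist_eq_one_iff_adj.mpr h]; rfl
  · intro w hw hwu hwv
    simp [Walk.support_cons] at hw
    rcases hw with rfl | rfl
    · exact absurd rfl hwu
    · exact absurd rfl hwv

private lemma svis_two' (huv : ¬H.Adj u v) (hne : u ≠ v) (h1 : H.Adj u w) (h2 : H.Adj w v)
    (hwS : w ∉ S) : H.SVisible S u v := by
  refine ⟨Walk.cons h1 (Walk.cons h2 Walk.nil), ⟨?_, ?_⟩, ?_⟩
  · simp [Walk.isPath_def, h1.ne, h2.ne, hne, h1.ne']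
  · simp [dist_eq_two' huv hne h1 h2]
  · intro x hx hxu hxv
    simp [Walk.support_cons] at hx
    rcases hx with rfl | rfl | rfl
    · exact absurd rfl hxu
    · exact hwS
    · exact absurd rfl hxv

private lemma not_svis_two' (hd : H.dist u v = 2)
    (hall : ∀ w, H.Adj u w → H.Adj w v → w ∈ S) : ¬ H.SVisible S u v := by
  rintro ⟨p, ⟨hp, hlen⟩, hint⟩
  rw [hd] at hlen
  set w := p.getVert 1 with hw
  have h1 : H.Adj u w := by
    have := p.adj_getVert_succ (i := 0) (by omega)
    simpa [p.getVert_zero] using this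
  have h2 : H.Adj w v := by
    have := p.adj_getVert_succ (i := 1) (by omega)
    have h2' : p.getVert 2 = v := by rw [← hlen]; exact p.getVert_length
    rwa [h2'] at this
  exact hint w (getVert_mem_support' p 1) h1.ne' h2.ne (hall w h1 h2)

end Aux

theorem mu_mycielskian_universal [Fintype V] (G : SimpleGraph V)
    (hn : 2 ≤ Fintype.card V) (huniv : ∃ v : V, ∀ w : V, w ≠ v → G.Adj v w) :
    G.mycielskian.mutualVisibilityNumber = 2 * Fintype.card V - 1 := by
  classical
  obtain ⟨v₀, hv₀⟩ := huniv
  set M := G.mycielskian with hM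
  set n := Fintype.card V with hn'
  have hdeg : ∀ c : V, ∃ x, G.Adj x c := by
    intro c
    by_cases h : c = v₀
    · obtain ⟨w, hw⟩ := Fintype.exists_ne_of_one_lt_card (by omega) v₀
      exact ⟨w, h ▸ (hv₀ w hw).symm⟩
    · exact ⟨v₀, hv₀ c h⟩
  have hcardO : Fintype.card (Option (V × Bool)) = 2 * n + 1 := by
    simp [Fintype.card_option, Fintype.card_prod]
    ring
  -- the witness set
  set S₀ : Finset (Option (V × Bool)) :=
    (Finset.univ.erase (some (v₀, false))).erase none with hS₀
  have hmemS₀ : ∀ x, x ∈ S₀ ↔ x ≠ none ∧ x ≠ some (v₀, false) := by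
    intro x; simp [hS₀, Finset.mem_erase, and_comm]
  have hcardS₀ : S₀.card = 2 * n - 1 := by
    rw [hS₀, Finset.card_erase_of_mem, Finset.card_erase_of_mem] <;>
      simp [Finset.card_univ, hcardO]
  have hMV : M.IsMVSet ↑S₀ := by
    rintro (_ | ⟨a, ba⟩) hu (_ | ⟨b, bb⟩) hv huv
    · simp [hmemS₀] at hu
    · simp [hmemS₀] at hu
    · simp [hmemS₀] at hv
    rw [Finset.mem_coe, hmemS₀] at hu hv
    have hnone : (none : Option (V × Bool)) ∉ (↑S₀ : Set (Option (V × Bool))) := by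
      simp [hmemS₀]
    have hvf : (some (v₀, false) : Option (V × Bool)) ∉ (↑S₀ : Set (Option (V × Bool))) := by
      simp [hmemS₀]
    match ba, bb with
    | false, false =>
      have ha : a ≠ v₀ := fun h => hu.2 (by rw [h])
      have hb : b ≠ v₀ := fun h => hv.2 (by rw [h])
      by_cases hab : G.Adj a b
      · exact svis_adj' hab
      · exact svis_two' (u := some (a, false)) (w := some (v₀, false)) hab huv
          ((hv₀ a ha).symm) (hv₀ b hb) hvf
    | false, true =>
      have ha : a ≠ v₀ := fun h => hu.2 (by rw [h])
      by_cases hab : G.Adj a b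
      · exact svis_adj' hab
      · have hb : b ≠ v₀ := fun h => hab (h ▸ (hv₀ a ha).symm)
        exact svis_two' (u := some (a, false)) (w := some (v₀, false)) hab huv
          ((hv₀ a ha).symm) (hv₀ b hb) hvf
    | true, false =>
      have hb : b ≠ v₀ := fun h => hv.2 (by rw [h])
      by_cases hab : G.Adj a b
      · exact svis_adj' hab
      · have ha : a ≠ v₀ := fun h => hab (h ▸ hv₀ b hb)
        exact svis_two' (u := some (a, true)) (w := some (v₀, false)) hab huv
          ((hv₀ a ha).symm) (hv₀ b hb) hvf
    | true, true =>
      exact svis_two' (u := some (a, true)) (v := some (b, true)) (w := none)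
        (fun h => h) huv trivial trivial hnone
  have hub : ∀ k ∈ {k | ∃ S : Finset (Option (V × Bool)), M.IsMVSet ↑S ∧ S.card = k},
      k ≤ 2 * n - 1 := by
    rintro k ⟨S, hS, rfl⟩
    by_contra hlt
    push_neg at hlt
    have hge : 2 * n ≤ S.card := by omega
    have hcle : S.card ≤ 2 * n + 1 := by
      rw [← hcardO]; exact Finset.card_le_univ S
    have huniq : ∀ x y : Option (V × Bool), x ∉ S → y ∉ S → x = y := by
      intro x y hx hy
      have hc : Sᶜ.card ≤ 1 := by
        have := Finset.card_compl S
        rw [hcardO] at this; omega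
      exact Finset.card_le_one.mp hc x (Finset.mem_compl.mpr hx) y (Finset.mem_compl.mpr hy)
    by_cases hT : ∀ c : V, some (c, true) ∈ S
    · by_cases hF : ∀ c : V, some (c, false) ∈ S
      · -- pair (a,true),(a,false)
        obtain ⟨a⟩ : Nonempty V := Fintype.card_pos_iff.mp (by omega)
        obtain ⟨x, hx⟩ := hdeg a
        have hd : M.dist (some (a, true)) (some (a, false)) = 2 :=
          dist_eq_two' (w := some (x, false)) (fun h => (G.irrefl (v := a)) h) (by simp)
            (show M.Adj (some (a, true)) (some (x, false)) from hx.symm)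
            (show M.Adj (some (x, false)) (some (a, false)) from hx)
        refine not_svis_two' hd ?_ (hS _ (by exact_mod_cast hT a) _ (by exact_mod_cast hF a)
          (by simp))
        rintro (_ | ⟨y, (_|_)⟩) h1 h2
        · exact h2.elim
        · exact hF y
        · exact hT y
      · push_neg at hF
        obtain ⟨c, hc⟩ := hF
        obtain ⟨d, hd1⟩ := Fintype.exists_ne_of_one_lt_card (by omega) c
        have hnoneS : none ∈ S := by
          by_contra h
          exact absurd (huniq _ _ h hc) (by simp)
        have hd : M.dist (some (c, true)) (some (d, true)) = 2 :=
          dist_eq_two' (w := (none : Option (V × Bool))) (fun h => h)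
            (by simp [Ne.symm hd1])
            (show M.Adj (some (c, true)) none from trivial)
            (show M.Adj none (some (d, true)) from trivial)
        refine not_svis_two' hd ?_ (hS _ (by exact_mod_cast hT c) _ (by exact_mod_cast hT d)
          (by simp [Ne.symm hd1]))
        rintro (_ | ⟨y, (_|_)⟩) h1 h2
        · exact hnoneS
        · by_contra h
          have := huniq _ _ h hc
          have hy : y = c := by simpa using this
          have hcy : G.Adj c y := h1
          exact (hcy.ne hy.symm).elim
        · exact hT y
    · push_neg at hT
      obtain ⟨c, hc⟩ := hT
      obtain ⟨x, hx⟩ := hdeg c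
      have hcF : some (c, false) ∈ S := by
        by_contra h
        have := huniq _ _ h hc
        simp at this
      have hnoneS : none ∈ S := by
        by_contra h
        exact absurd (huniq _ _ h hc) (by simp)
      have hd : M.dist (some (c, false)) none = 2 :=
        dist_eq_two' (u := some (c, false)) (v := none) (w := some (x, true))
          (fun h => h) (by simp)
          (show M.Adj (some (c, false)) (some (x, true)) from hx.symm)
          (show M.Adj (some (x, true)) none from trivial)
      refine not_svis_two' hd ?_ (hS _ (by exact_mod_cast hcF) _ (by exact_mod_cast hnoneS)
        (by simp))
      rintro (_ | ⟨y, (_|_)⟩) h1 h2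
      · exact h1.elim
      · exact h2.elim
      · by_contra h
        have := huniq _ _ h hc
        have hy : y = c := by simpa using this
        have hcy : G.Adj c y := h1
        exact (hcy.ne hy.symm).elim
  -- conclude
  have hmem : 2 * n - 1 ∈
      {k | ∃ S : Finset (Option (V × Bool)), M.IsMVSet ↑S ∧ S.card = k} :=
    ⟨S₀, hMV, hcardS₀⟩
  refine le_antisymm (csSup_le ⟨2 * n - 1, hmem⟩ hub) (le_csSup ⟨2 * n - 1, hub⟩ hmem)
end
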